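/- Let N_r ≥ 2 be an integer. Among all (2N_r)! bijections R from {1,2}×{1,…,N_r} to {1,…,2N_r}, the fraction of bijections for which V(R) = 2N_r − 2 (i.e., the ORS minimum SNR equals the third largest entry γ₃) equals (N_r + 2)/(2(2N_r − 1)). Equivalently, the fraction of bijections for which either (a) the two largest ranks lie in the same column, or (b) the two largest ranks lie in the same row and the third largest rank lies in the other row, equals (N_r + 2)/(2(2N_r − 1)). -/

import Mathlib

open Finset

/-- The optimal max-min assignment value for a rank assignment
`R : Fin 2 × Fin Nr ≃ Fin (2·Nr)` (the rank of cell `c` is `(R c).val + 1`):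
`V(R) = max_{j₁ ≠ j₂} min (rank (1, j₁)) (rank (2, j₂))`. -/
def ORSvalue (Nr : ℕ) (R : (Fin 2 × Fin Nr) ≃ Fin (2 * Nr)) : ℕ :=
  Finset.sup (Finset.univ.filter fun p : Fin Nr × Fin Nr => p.1 ≠ p.2)
    (fun p => min ((R (0, p.1)).val + 1) ((R (1, p.2)).val + 1))

namespace ORSaux

abbrev Cell (Nr : ℕ) := Fin 2 × Fin Nr

def ORScond (Nr : ℕ) (t : Cell Nr × Cell Nr × Cell Nr) : Prop :=
  t.1.2 = t.2.1.2 ∨ (t.1.1 = t.2.1.1 ∧ t.2.2.1 ≠ t.1.1)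

instance {Nr} : DecidablePred (ORScond Nr) := fun t => by unfold ORScond; infer_instance

def ORSdist (Nr : ℕ) (t : Cell Nr × Cell Nr × Cell Nr) : Prop :=
  t.1 ≠ t.2.1 ∧ t.1 ≠ t.2.2 ∧ t.2.1 ≠ t.2.2

instance {Nr} : DecidablePred (ORSdist Nr) := fun t => by unfold ORSdist; infer_instance

lemma fin2_ne : ∀ a : Fin 2, a ≠ a + 1 := by decide
lemma fin2_ne' : ∀ a : Fin 2, a + 1 ≠ a := by decide
lemma fin2_eq_add_one {a b : Fin 2} (h : a ≠ b) : b = a + 1 := by revert h; revert a b; decide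

def tripleEquiv {α β : Type*} [DecidableEq α] [DecidableEq β]
    (a1 a2 a3 : α) (b1 b2 b3 : β)
    (ha12 : a1 ≠ a2) (ha13 : a1 ≠ a3) (ha23 : a2 ≠ a3)
    (hb12 : b1 ≠ b2) (hb13 : b1 ≠ b3) (hb23 : b2 ≠ b3) :
    ({a1, a2, a3} : Set α) ≃ ({b1, b2, b3} : Set β) where
  toFun x := if x.1 = a1 then ⟨b1, by simp⟩ else if x.1 = a2 then ⟨b2, by simp⟩
    else ⟨b3, by simp⟩
  invFun y := if y.1 = b1 then ⟨a1, by simp⟩ else if y.1 = b2 then ⟨a2, by simp⟩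
    else ⟨a3, by simp⟩
  left_inv := by
    rintro ⟨x, hx⟩
    rcases hx with h | h | h <;> subst h <;>
      simp [ha12, ha13, ha23, hb12, hb13, hb23, ha12.symm, ha13.symm, ha23.symm,
        hb12.symm, hb13.symm, hb23.symm]
  right_inv := by
    rintro ⟨y, hy⟩
    rcases hy with h | h | h <;> subst h <;>
      simp [ha12, ha13, ha23, hb12, hb13, hb23, ha12.symm, ha13.symm, ha23.symm,
        hb12.symm, hb13.symm, hb23.symm]

lemma card_fiber {α β : Type*} [Fintype α] [DecidableEq α] [Fintype β] [DecidableEq β]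
    (hcard : Fintype.card α = Fintype.card β)
    (a1 a2 a3 : α) (b1 b2 b3 : β)
    (ha12 : a1 ≠ a2) (ha13 : a1 ≠ a3) (ha23 : a2 ≠ a3)
    (hb12 : b1 ≠ b2) (hb13 : b1 ≠ b3) (hb23 : b2 ≠ b3) :
    Fintype.card {R : α ≃ β // R a1 = b1 ∧ R a2 = b2 ∧ R a3 = b3} =
      (Fintype.card α - 3).factorial := by
  classical
  set e₀ := tripleEquiv a1 a2 a3 b1 b2 b3 ha12 ha13 ha23 hb12 hb13 hb23 with he₀
  have key : ∀ R : α ≃ β, (R a1 = b1 ∧ R a2 = b2 ∧ R a3 = b3) ↔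
      (∀ x : ({a1, a2, a3} : Set α), R x = e₀ x) := by
    intro R
    constructor
    · rintro ⟨h1, h2, h3⟩ ⟨x, hx⟩
      rcases hx with h | h | h <;> subst h <;>
        simp [he₀, tripleEquiv, ha12, ha13, ha23, ha12.symm, ha13.symm, ha23.symm, h1, h2, h3]
    · intro h
      refine ⟨?_, ?_, ?_⟩
      · simpa [he₀, tripleEquiv] using h ⟨a1, by simp⟩
      · simpa [he₀, tripleEquiv, ha12.symm] using h ⟨a2, by simp⟩
      · simpa [he₀, tripleEquiv, ha13.symm, ha23.symm] using h ⟨a3, by simp⟩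
  have e1 : {R : α ≃ β // R a1 = b1 ∧ R a2 = b2 ∧ R a3 = b3} ≃
      ((({a1, a2, a3} : Set α)ᶜ : Set α) ≃ (({b1, b2, b3} : Set β)ᶜ : Set β)) :=
    (Equiv.subtypeEquivRight key).trans (Equiv.Set.compl e₀)
  rw [Fintype.card_congr e1]
  have hA : Fintype.card (({a1, a2, a3} : Set α)ᶜ : Set α) = Fintype.card α - 3 := by
    rw [Fintype.card_compl_set]
    have h3 : Fintype.card ({a1, a2, a3} : Set α) = 3 := by
      rw [← Set.toFinset_card]
      rw [Set.toFinset_insert, Set.toFinset_insert, Set.toFinset_singleton,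
        card_insert_of_notMem (by simp [ha12, ha13]), card_insert_of_notMem (by simp [ha23]),
        card_singleton]
    omega
  have hB : Fintype.card (({b1, b2, b3} : Set β)ᶜ : Set β) = Fintype.card α - 3 := by
    rw [Fintype.card_compl_set, ← hcard]
    have h3 : Fintype.card ({b1, b2, b3} : Set β) = 3 := by
      rw [← Set.toFinset_card]
      rw [Set.toFinset_insert, Set.toFinset_insert, Set.toFinset_singleton,
        card_insert_of_notMem (by simp [hb12, hb13]), card_insert_of_notMem (by simp [hb23]),
        card_singleton]
    omega
  rw [Fintype.card_equiv (Fintype.equivOfCardEq (hA.trans hB.symm))]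
  rw [hA]

lemma card_goodTriples (Nr : ℕ) :
    (univ.filter fun t => ORSdist Nr t ∧ ORScond Nr t).card
      = 2*Nr*(2*Nr-2) + 2*((Nr*Nr - Nr)*Nr) := by
  classical
  have hsplit : (univ.filter fun t => ORSdist Nr t ∧ ORScond Nr t)
      = (univ.filter fun t => ORSdist Nr t ∧ t.1.2 = t.2.1.2)
        ∪ (univ.filter fun t => ORSdist Nr t ∧ (t.1.1 = t.2.1.1 ∧ t.2.2.1 ≠ t.1.1)) := by
    ext t; simp only [mem_filter, mem_union, mem_univ, true_and]; simp only [ORScond]; tauto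
  have hdisj : Disjoint (univ.filter fun t => ORSdist Nr t ∧ t.1.2 = t.2.1.2)
      (univ.filter fun t => ORSdist Nr t ∧ (t.1.1 = t.2.1.1 ∧ t.2.2.1 ≠ t.1.1)) := by
    rw [disjoint_left]
    intro t ht ht'
    simp only [mem_filter] at ht ht'
    exact ht.2.1.1 (Prod.ext ht'.2.2.1 ht.2.2)
  rw [hsplit, card_union_of_disjoint hdisj]
  have hA : (univ.filter fun t : Cell Nr × Cell Nr × Cell Nr =>
      ORSdist Nr t ∧ t.1.2 = t.2.1.2).card = 2*Nr*(2*Nr-2) := by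
    set FA := univ.filter fun t : Cell Nr × Cell Nr × Cell Nr => ORSdist Nr t ∧ t.1.2 = t.2.1.2
      with hFA
    have hfib : ∀ x ∈ FA, (fun t : Cell Nr × Cell Nr × Cell Nr => t.1) x ∈
        (univ : Finset (Cell Nr)) := fun x _ => mem_univ _
    rw [card_eq_sum_card_fiberwise hfib]
    have hone : ∀ c : Cell Nr, (FA.filter fun t => t.1 = c).card = 2*Nr - 2 := by
      intro c
      have himg : FA.filter (fun t => t.1 = c)
          = ({c, (c.1+1, c.2)}ᶜ : Finset (Cell Nr)).image (fun x => (c, (c.1+1, c.2), x)) := by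
        ext t
        simp only [hFA, mem_filter, mem_image, mem_compl, mem_insert, mem_singleton,
          mem_univ, true_and]
        simp only [ORSdist]
        constructor
        · rintro ⟨⟨⟨h12, h13, h23⟩, hcol⟩, rfl⟩
          have hrow : t.2.1.1 = t.1.1 + 1 :=
            fin2_eq_add_one (fun he => h12 (Prod.ext he hcol))
          have h2 : t.2.1 = (t.1.1 + 1, t.1.2) := Prod.ext hrow hcol.symm
          refine ⟨t.2.2, ?_, by rw [← h2]⟩
          push_neg
          exact ⟨fun h => h13 h.symm, fun h => h23 (h2.trans h.symm)⟩
        · rintro ⟨x, hx, rfl⟩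
          push_neg at hx
          exact ⟨⟨⟨fun h => fin2_ne c.1 (congrArg Prod.fst h), fun h => hx.1 h.symm,
            fun h => hx.2 h.symm⟩, rfl⟩, rfl⟩
      rw [himg, card_image_of_injective _ (fun x y h => by
        simpa using congrArg (fun t : Cell Nr × Cell Nr × Cell Nr => t.2.2) h)]
      rw [card_compl, card_insert_of_notMem (by simp [Prod.ext_iff, fin2_ne c.1]),
        card_singleton]
      simp
    rw [Finset.sum_congr rfl (fun c _ => hone c), sum_const, card_univ, smul_eq_mul]
    simp [mul_comm]
  have hB : (univ.filter fun t : Cell Nr × Cell Nr × Cell Nr =>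
      ORSdist Nr t ∧ (t.1.1 = t.2.1.1 ∧ t.2.2.1 ≠ t.1.1)).card = 2*((Nr*Nr - Nr)*Nr) := by
    have himg : (univ.filter fun t : Cell Nr × Cell Nr × Cell Nr =>
        ORSdist Nr t ∧ (t.1.1 = t.2.1.1 ∧ t.2.2.1 ≠ t.1.1))
        = ((univ ×ˢ ((univ.offDiag) ×ˢ univ)) : Finset (Fin 2 × (Fin Nr × Fin Nr) × Fin Nr)).image
            (fun q => ((q.1, q.2.1.1), (q.1, q.2.1.2), (q.1+1, q.2.2))) := by
      ext t
      obtain ⟨⟨r1, c1⟩, ⟨r2, c2⟩, ⟨r3, c3⟩⟩ := t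
      simp only [mem_filter, mem_image, mem_product, mem_offDiag, mem_univ, true_and,
        ne_eq, Prod.mk.injEq, not_and]
      simp only [ORSdist, ne_eq, Prod.mk.injEq, not_and]
      constructor
      · rintro ⟨⟨h12, h13, h23⟩, hrow, hrow3⟩
        subst hrow
        have h3 : r3 = r1 + 1 := fin2_eq_add_one (Ne.symm hrow3)
        subst h3
        exact ⟨(r1, (c1, c2), c3), ⟨fun h => h12 rfl h, trivial⟩, by simp⟩
      · rintro ⟨q, hq, ⟨hq1, hq2⟩, ⟨hq3, hq4⟩, hq5, hq6⟩
        subst hq1 hq2 hq3 hq4 hq5 hq6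
        refine ⟨⟨fun _ h => hq.1 h, fun h => (fin2_ne q.1 h).elim,
          fun h => (fin2_ne q.1 h).elim⟩, rfl, ?_⟩
        exact fun h => fin2_ne q.1 h.symm
    rw [himg, card_image_of_injective _ (fun x y h => by
      simpa using congrArg (fun t : Cell Nr × Cell Nr × Cell Nr =>
        (t.1.1, (t.1.2, t.2.1.2), t.2.2.2)) h)]
    simp [card_product, offDiag_card]
  rw [hA, hB]

lemma card_condSet (Nr : ℕ) (v1 v2 v3 : Fin (2*Nr)) (h12 : v1 ≠ v2) (h13 : v1 ≠ v3)
    (h23 : v2 ≠ v3) :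
    (univ.filter fun R : Cell Nr ≃ Fin (2*Nr) =>
        ORScond Nr (R.symm v1, R.symm v2, R.symm v3)).card
      = (univ.filter fun t => ORSdist Nr t ∧ ORScond Nr t).card * (2*Nr - 3).factorial := by
  classical
  set T : (Cell Nr ≃ Fin (2*Nr)) → Cell Nr × Cell Nr × Cell Nr :=
    fun R => (R.symm v1, R.symm v2, R.symm v3) with hT
  have hmap : ∀ R ∈ (univ.filter fun R => ORScond Nr (T R)),
      T R ∈ univ.filter (fun t => ORSdist Nr t ∧ ORScond Nr t) := by
    intro R hR
    simp only [mem_filter, mem_univ, true_and] at hR ⊢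
    exact ⟨⟨fun h => h12 (R.symm.injective h), fun h => h13 (R.symm.injective h),
      fun h => h23 (R.symm.injective h)⟩, hR⟩
  rw [card_eq_sum_card_fiberwise hmap]
  have hfib : ∀ t ∈ univ.filter (fun t => ORSdist Nr t ∧ ORScond Nr t),
      ((univ.filter fun R => ORScond Nr (T R)).filter fun R => T R = t).card
        = (2*Nr - 3).factorial := by
    intro t ht
    simp only [mem_filter, mem_univ, true_and] at ht
    have hSf : (univ.filter fun R => ORScond Nr (T R)).filter (fun R => T R = t)
        = univ.filter (fun R => T R = t) := by
      ext R
      simp only [mem_filter, mem_univ, true_and]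
      constructor
      · exact fun h => h.2
      · exact fun h => ⟨by rw [h]; exact ht.2, h⟩
    rw [hSf, ← Fintype.card_subtype]
    have hiff : ∀ R : Cell Nr ≃ Fin (2*Nr), T R = t ↔
        (R t.1 = v1 ∧ R t.2.1 = v2 ∧ R t.2.2 = v3) := by
      intro R
      constructor
      · rintro rfl; simp [hT]
      · rintro ⟨e1, e2, e3⟩
        rw [hT]
        exact Prod.ext (by rw [← e1]; simp)
          (Prod.ext (by rw [← e2]; simp) (by rw [← e3]; simp))
    rw [Fintype.card_congr (Equiv.subtypeEquivRight hiff)]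
    rw [card_fiber (by simp) t.1 t.2.1 t.2.2 v1 v2 v3 ht.1.1 ht.1.2.1 ht.1.2.2 h12 h13 h23]
    congr 2
    simp
  rw [Finset.sum_congr rfl hfib, sum_const, smul_eq_mul]

lemma key_iff (Nr : ℕ) (c1 c2 c3 : Cell Nr) (h12 : c1 ≠ c2) (h13 : c1 ≠ c3) (h23 : c2 ≠ c3) :
    ((∃ j1 j2 : Fin Nr, j1 ≠ j2 ∧ ((0,j1) = c1 ∨ (0,j1) = c2 ∨ (0,j1) = c3)
        ∧ ((1,j2) = c1 ∨ (1,j2) = c2 ∨ (1,j2) = c3)) ∧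
      ¬(∃ j1 j2 : Fin Nr, j1 ≠ j2 ∧ ((0,j1) = c1 ∨ (0,j1) = c2)
        ∧ ((1,j2) = c1 ∨ (1,j2) = c2)))
    ↔ ORScond Nr (c1, c2, c3) := by
  obtain ⟨a1, b1⟩ := c1
  obtain ⟨a2, b2⟩ := c2
  obtain ⟨a3, b3⟩ := c3
  have e01 : (0 : Fin 2) ≠ 1 := by decide
  simp only [ORScond, Prod.mk.injEq, ne_eq] at *
  fin_cases a1 <;> fin_cases a2 <;> fin_cases a3 <;> simp_all
  · -- (0,0,1)
    by_cases hb : b1 = b3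
    · exact ⟨b2, fun h => h12 (hb.trans h.symm), Or.inr rfl⟩
    · exact ⟨b1, hb, Or.inl rfl⟩
  · -- (0,1,0)
    intro h
    exact ⟨b3, fun hh => h13 (h.trans hh.symm), Or.inr rfl⟩
  · -- (0,1,1)
    intro h
    exact ⟨b3, h23, Or.inr rfl⟩
  · -- (1,0,0)
    constructor
    · exact fun h => h.2.symm
    · intro h
      exact ⟨⟨b3, fun hh => h23 (h.symm.trans hh.symm), Or.inr rfl⟩, h.symm⟩
  · -- (1,0,1)
    constructor
    · exact fun h => h.2.symm
    · intro h
      exact ⟨⟨b3, fun hh => h13 (h.trans hh), Or.inr rfl⟩, h.symm⟩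
  · -- (1,1,0)
    by_cases hb : b3 = b1
    · exact ⟨b2, fun h => h12 (hb.symm.trans h), Or.inr rfl⟩
    · exact ⟨b1, fun h => hb h, Or.inl rfl⟩

lemma ors_iff (Nr : ℕ) (hNr : 2 ≤ Nr) (R : Cell Nr ≃ Fin (2*Nr))
    (v1 v2 v3 : Fin (2*Nr)) (hv1 : v1.val = 2*Nr-1) (hv2 : v2.val = 2*Nr-2)
    (hv3 : v3.val = 2*Nr-3) :
    ORSvalue Nr R = 2*Nr - 2 ↔ ORScond Nr (R.symm v1, R.symm v2, R.symm v3) := by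
  classical
  set c1 := R.symm v1 with hc1
  set c2 := R.symm v2 with hc2
  set c3 := R.symm v3 with hc3
  have hNr4 : 4 ≤ 2 * Nr := by omega
  have hd12 : c1 ≠ c2 := fun h => by
    have := R.symm.injective h; rw [Fin.ext_iff, hv1, hv2] at this; omega
  have hd13 : c1 ≠ c3 := fun h => by
    have := R.symm.injective h; rw [Fin.ext_iff, hv1, hv3] at this; omega
  have hd23 : c2 ≠ c3 := fun h => by
    have := R.symm.injective h; rw [Fin.ext_iff, hv2, hv3] at this; omega
  have htop2 : ∀ c : Cell Nr, (2*Nr - 1 ≤ (R c).val + 1) ↔ (c = c1 ∨ c = c2) := by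
    intro c
    have h1 : c = c1 ↔ ((R c) : ℕ) = 2*Nr-1 := by
      rw [hc1, Equiv.eq_symm_apply, ← hv1, Fin.val_eq_val]
    have h2 : c = c2 ↔ ((R c) : ℕ) = 2*Nr-2 := by
      rw [hc2, Equiv.eq_symm_apply, ← hv2, Fin.val_eq_val]
    rw [h1, h2]
    have := (R c).isLt
    omega
  have htop3 : ∀ c : Cell Nr, (2*Nr - 2 ≤ (R c).val + 1) ↔ (c = c1 ∨ c = c2 ∨ c = c3) := by
    intro c
    have h1 : c = c1 ↔ ((R c) : ℕ) = 2*Nr-1 := by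
      rw [hc1, Equiv.eq_symm_apply, ← hv1, Fin.val_eq_val]
    have h2 : c = c2 ↔ ((R c) : ℕ) = 2*Nr-2 := by
      rw [hc2, Equiv.eq_symm_apply, ← hv2, Fin.val_eq_val]
    have h3 : c = c3 ↔ ((R c) : ℕ) = 2*Nr-3 := by
      rw [hc3, Equiv.eq_symm_apply, ← hv3, Fin.val_eq_val]
    rw [h1, h2, h3]
    have := (R c).isLt
    omega
  have hsup : ∀ k : ℕ, 0 < k → (k ≤ ORSvalue Nr R ↔ ∃ j1 j2 : Fin Nr, j1 ≠ j2 ∧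
      k ≤ (R (0,j1)).val + 1 ∧ k ≤ (R (1,j2)).val + 1) := by
    intro k hk
    rw [ORSvalue, Finset.le_sup_iff (show (⊥ : ℕ) < k from hk)]
    constructor
    · rintro ⟨p, hp, hmin⟩
      exact ⟨p.1, p.2, by simpa using hp, le_min_iff.mp hmin⟩
    · rintro ⟨j1, j2, hne, hk1, hk2⟩
      exact ⟨(j1, j2), by simpa using hne, le_min_iff.mpr ⟨hk1, hk2⟩⟩
  have hval : ORSvalue Nr R = 2*Nr-2 ↔
      (2*Nr-2 ≤ ORSvalue Nr R ∧ ¬(2*Nr-1 ≤ ORSvalue Nr R)) := by omega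
  rw [hval, hsup _ (by omega), hsup _ (by omega)]
  simp only [htop2, htop3]
  exact key_iff Nr c1 c2 c3 hd12 hd13 hd23

end ORSaux

open ORSaux

theorem ORS_min_eq_third_largest_fraction (Nr : ℕ) (hNr : 2 ≤ Nr) :
    (Nat.card {R : (Fin 2 × Fin Nr) ≃ Fin (2 * Nr) // ORSvalue Nr R = 2 * Nr - 2} : ℝ)
        / (Nat.factorial (2 * Nr) : ℝ)
      = ((Nr : ℝ) + 2) / (2 * (2 * (Nr : ℝ) - 1))
    ∧ (Nat.card {R : (Fin 2 × Fin Nr) ≃ Fin (2 * Nr) //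
          (R.symm ⟨2 * Nr - 1, by omega⟩).2 = (R.symm ⟨2 * Nr - 2, by omega⟩).2 ∨
          ((R.symm ⟨2 * Nr - 1, by omega⟩).1 = (R.symm ⟨2 * Nr - 2, by omega⟩).1 ∧
            (R.symm ⟨2 * Nr - 3, by omega⟩).1 ≠ (R.symm ⟨2 * Nr - 1, by omega⟩).1)} : ℝ)
        / (Nat.factorial (2 * Nr) : ℝ)
      = ((Nr : ℝ) + 2) / (2 * (2 * (Nr : ℝ) - 1)) := by
  classical
  have hNr4 : 4 ≤ 2 * Nr := by omega
  set v1 : Fin (2*Nr) := ⟨2*Nr-1, by omega⟩ with hvv1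
  set v2 : Fin (2*Nr) := ⟨2*Nr-2, by omega⟩ with hvv2
  set v3 : Fin (2*Nr) := ⟨2*Nr-3, by omega⟩ with hvv3
  have h12 : v1 ≠ v2 := by rw [hvv1, hvv2]; simp [Fin.ext_iff]; omega
  have h13 : v1 ≠ v3 := by rw [hvv1, hvv3]; simp [Fin.ext_iff]; omega
  have h23 : v2 ≠ v3 := by rw [hvv2, hvv3]; simp [Fin.ext_iff]; omega
  have main : (Nat.card {R : Cell Nr ≃ Fin (2*Nr) //
        ORScond Nr (R.symm v1, R.symm v2, R.symm v3)} : ℝ) / (Nat.factorial (2*Nr) : ℝ)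
      = ((Nr : ℝ) + 2) / (2 * (2 * (Nr : ℝ) - 1)) := by
    rw [Nat.card_eq_fintype_card, Fintype.card_subtype,
      card_condSet Nr v1 v2 v3 h12 h13 h23, card_goodTriples Nr]
    obtain ⟨m, rfl⟩ : ∃ m, Nr = m + 2 := ⟨Nr - 2, by omega⟩
    have e2 : 2*(m+2)-2 = 2*m+2 := by omega
    have e3 : 2*(m+2)-3 = 2*m+1 := by omega
    have e4 : (m+2)*(m+2)-(m+2) = m*m+3*m+2 := by
      have h : (m+2)*(m+2) = m*m+4*m+4 := by ring
      omega
    rw [e2, e3, e4]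
    have hfact : (2*(m+2)).factorial = ((2*m+4)*(2*m+3)*(2*m+2)) * (2*m+1).factorial := by
      rw [show 2*(m+2) = ((2*m+1)+1+1+1) by ring]
      simp [Nat.factorial_succ]
      ring
    rw [hfact]
    push_cast
    rw [div_eq_div_iff (by positivity) (by
      have h : (0:ℝ) ≤ (m:ℝ) := Nat.cast_nonneg m
      nlinarith)]
    ring
  constructor
  · have h := Nat.card_congr (Equiv.subtypeEquivRight (fun R =>
      ors_iff Nr hNr R v1 v2 v3 rfl rfl rfl))
    rw [h]
    exact main
  · exact main
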